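/- Let n ≥ 1 be an integer and R > 0, and define z : (0,∞) → ℝ by z(r) = (1/2)(r/R)³ − (3/2)(r/R). Then (L_n z)(r) = −n(n+2)/R³ for all r > 0, z(R) = −1, z′(R) = 0, and |z(r)| ≤ 1 for all r ∈ [0, R]. (This shows that every ball in ℝⁿ is calibrable: Z(x) = z(|x|)x/|x| is a radial Cahn–Hoffman calibration for B_R with signature −1.) -/

import Mathlib

/-- The radial operator
`(L_n z)(r) = −r^{1−n} (r^{n−1} (r^{1−n} (r^{n−1} z)′)′)′`. -/
noncomputable def Lrad (n : ℕ) (z : ℝ → ℝ) (r : ℝ) : ℝ :=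
  -(r ^ ((1 : ℤ) - (n : ℤ))) *
    deriv (fun s : ℝ => s ^ ((n : ℤ) - 1) *
      deriv (fun u : ℝ => u ^ ((1 : ℤ) - (n : ℤ)) *
        deriv (fun w : ℝ => w ^ ((n : ℤ) - 1) * z w) u) s) r

/-- Every ball is calibrable: `z(r) = (1/2)(r/R)³ − (3/2)(r/R)` satisfies
`L_n z = −n(n+2)/R³`, `z(R) = −1`, `z′(R) = 0` and `|z| ≤ 1` on `[0, R]`. -/
theorem stmt_4 (n : ℕ) (hn : 1 ≤ n) (R : ℝ) (hR : 0 < R)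
    (z : ℝ → ℝ) (hz : z = fun r => (1 / 2) * (r / R) ^ 3 - (3 / 2) * (r / R)) :
    (∀ r : ℝ, 0 < r → Lrad n z r = -((n : ℝ) * ((n : ℝ) + 2)) / R ^ 3) ∧
    z R = -1 ∧ deriv z R = 0 ∧ ∀ r ∈ Set.Icc 0 R, |z r| ≤ 1 := by
  have hR0 : R ≠ 0 := hR.ne'
  set m : ℤ := (n : ℤ) with hm
  -- derivative of z at any point
  have hzd : ∀ w : ℝ, HasDerivAt z (3 * w ^ 2 / (2 * R ^ 3) - 3 / (2 * R)) w := by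
    intro w
    rw [hz]
    have h1 : HasDerivAt (fun w : ℝ => w / R) (1 / R) w := by
      simpa using (hasDerivAt_id w).div_const R
    have h2 := ((h1.pow 3).const_mul (1 / 2 : ℝ)).sub (h1.const_mul (3 / 2 : ℝ))
    refine h2.congr_deriv ?_
    field_simp
    have hRi : R ^ 2 * R⁻¹ ^ 2 = 1 := by field_simp
    linear_combination (3 * w ^ 2) * hRi
  -- key1 : inner derivative
  have key1 : ∀ w : ℝ, 0 < w →
      deriv (fun w => w ^ (m - 1) * z w) w
        = ((n : ℝ) + 2) / (2 * R ^ 3) * w ^ (m + 1) - 3 * (n : ℝ) / (2 * R) * w ^ (m - 1) := by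
    intro w hw0
    have hw : w ≠ 0 := hw0.ne'
    have hP : HasDerivAt (fun w : ℝ => w ^ (m - 1)) (((m : ℝ) - 1) * w ^ (m - 2)) w := by
      have := hasDerivAt_zpow (m - 1) w (Or.inl hw)
      exact this.congr_deriv (by rw [show m - 1 - 1 = m - 2 by ring]; push_cast; ring)
    have hprod := hP.mul (hzd w)
    rw [show (fun w => w ^ (m - 1) * z w) = (fun w : ℝ => w ^ (m - 1)) * z from rfl, hprod.deriv]
    have hpow : ∀ (k : ℤ) (j : ℕ), w ^ (k + (j : ℤ)) = w ^ k * w ^ j := by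
      intro k j; rw [zpow_add₀ hw, zpow_natCast]
    have e1 : w ^ (m + 1) = w ^ (m - 2) * w ^ (3 : ℕ) := by
      rw [show m + 1 = (m - 2) + ((3 : ℕ) : ℤ) by push_cast; ring, hpow]
    have e2 : w ^ (m - 1) = w ^ (m - 2) * w ^ (1 : ℕ) := by
      rw [show m - 1 = (m - 2) + ((1 : ℕ) : ℤ) by push_cast; ring, hpow]
    rw [hz, e1, e2]
    simp only [hm]
    push_cast
    field_simp
    ring
  refine ⟨?_, ?_, ?_, ?_⟩
  · intro r hr
    have hrne : r ≠ 0 := hr.ne'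
    have hmem : ∀ᶠ u in nhds r, (0 : ℝ) < u := eventually_gt_nhds hr
    -- step 2
    have E1 : (fun u : ℝ => u ^ ((1 : ℤ) - m) * deriv (fun w => w ^ (m - 1) * z w) u)
        =ᶠ[nhds r] (fun u : ℝ => ((n : ℝ) + 2) / (2 * R ^ 3) * u ^ 2 - 3 * (n : ℝ) / (2 * R)) := by
      filter_upwards [hmem] with u hu
      have hune : u ≠ 0 := hu.ne'
      rw [key1 u hu]
      have e3 : u ^ ((1 : ℤ) - m) * u ^ (m + 1) = u ^ (2 : ℕ) := by
        rw [← zpow_add₀ hune, show (1 : ℤ) - m + (m + 1) = ((2 : ℕ) : ℤ) by push_cast; ring,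
          zpow_natCast]
      have e4 : u ^ ((1 : ℤ) - m) * u ^ (m - 1) = 1 := by
        rw [← zpow_add₀ hune, show (1 : ℤ) - m + (m - 1) = 0 by ring, zpow_zero]
      calc u ^ ((1:ℤ) - m) * (((n : ℝ) + 2) / (2 * R ^ 3) * u ^ (m + 1)
              - 3 * (n : ℝ) / (2 * R) * u ^ (m - 1))
          = ((n : ℝ) + 2) / (2 * R ^ 3) * (u ^ ((1:ℤ) - m) * u ^ (m + 1))
              - 3 * (n : ℝ) / (2 * R) * (u ^ ((1:ℤ) - m) * u ^ (m - 1)) := by ring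
        _ = _ := by rw [e3, e4]; push_cast; ring
    have E2 : deriv (fun u : ℝ => u ^ ((1 : ℤ) - m) * deriv (fun w => w ^ (m - 1) * z w) u)
        =ᶠ[nhds r] deriv (fun u : ℝ => ((n : ℝ) + 2) / (2 * R ^ 3) * u ^ 2 - 3 * (n : ℝ) / (2 * R)) :=
      E1.deriv
    have hq2 : ∀ s : ℝ, deriv (fun u : ℝ => ((n : ℝ) + 2) / (2 * R ^ 3) * u ^ 2
        - 3 * (n : ℝ) / (2 * R)) s = ((n : ℝ) + 2) / R ^ 3 * s := by
      intro s
      have h := (((hasDerivAt_pow 2 s).const_mul (((n : ℝ) + 2) / (2 * R ^ 3))).sub_const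
        (3 * (n : ℝ) / (2 * R)))
      rw [h.deriv]
      field_simp
      ring
    -- step 3
    have E3 : (fun s : ℝ => s ^ (m - 1) *
          deriv (fun u : ℝ => u ^ ((1 : ℤ) - m) * deriv (fun w => w ^ (m - 1) * z w) u) s)
        =ᶠ[nhds r] (fun s : ℝ => ((n : ℝ) + 2) / R ^ 3 * s ^ m) := by
      filter_upwards [E2, hmem] with s hs hs0
      rw [hs, hq2 s]
      have : s ^ (m - 1) * s = s ^ m := by
        rw [zpow_sub_one₀ hs0.ne']; field_simp
      calc s ^ (m - 1) * (((n : ℝ) + 2) / R ^ 3 * s)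
          = ((n : ℝ) + 2) / R ^ 3 * (s ^ (m - 1) * s) := by ring
        _ = _ := by rw [this]
    have hd3 : deriv (fun s : ℝ => ((n : ℝ) + 2) / R ^ 3 * s ^ m) r
        = ((n : ℝ) + 2) / R ^ 3 * ((m : ℝ) * r ^ (m - 1)) := by
      exact ((hasDerivAt_zpow m r (Or.inl hrne)).const_mul (((n : ℝ) + 2) / R ^ 3)).deriv
    have hone : r ^ ((1 : ℤ) - m) * r ^ (m - 1) = 1 := by
      rw [← zpow_add₀ hrne, show (1 : ℤ) - m + (m - 1) = 0 by ring, zpow_zero]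
    unfold Lrad
    rw [← hm, E3.deriv_eq, hd3]
    have : (m : ℝ) = (n : ℝ) := by push_cast [hm]; ring
    rw [this]
    calc -r ^ ((1 : ℤ) - m) * (((n : ℝ) + 2) / R ^ 3 * ((n : ℝ) * r ^ (m - 1)))
        = -((n : ℝ) * ((n : ℝ) + 2)) / R ^ 3 * (r ^ ((1 : ℤ) - m) * r ^ (m - 1)) := by ring
      _ = _ := by rw [hone]; ring
  · rw [hz]; field_simp; ring
  · have h := (hzd R).deriv
    rw [h]
    field_simp
    ring
  · intro r hr
    obtain ⟨hr0, hrR⟩ := hr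
    rw [hz]
    have ht0 : 0 ≤ r / R := div_nonneg hr0 hR.le
    have ht1 : r / R ≤ 1 := (div_le_one hR).mpr hrR
    rw [abs_le]
    constructor <;> nlinarith [sq_nonneg (r / R - 1), sq_nonneg (r / R + 1), sq_nonneg (r/R)]
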